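/- Let n ≥ 1, λ_1,…,λ_n > 0, and σ² > 0. Define for T > 0 the parametric distortion D(T) = (σ²/n)·Σ_{i=1}^n λ_i/(1 + λ_i T) and rate R(T) = (1/(2n))·Σ_{i=1}^n log₂(1 + λ_i T). Then lim_{T→∞} D(T)·2^{2R(T)} = σ²·(∏_{i=1}^n λ_i)^{1/n}. In other words, in the high-rate limit the scheme with isotropic codebook and Σ_X-aware encoding attains distortion |Σ_X|^{1/n}·σ²·2^{−2R} to first order, where λ_1,…,λ_n are the eigenvalues of Σ_X. -/

import Mathlib

open Finset Real Filter

lemma ratio_lim (a b : ℝ) (ha : 0 < a) (hb : 0 < b) :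
    Tendsto (fun T : ℝ => (1 + a * T) / (1 + b * T)) atTop (nhds (a / b)) := by
  have h1 : Tendsto (fun T : ℝ => (T⁻¹ + a) / (T⁻¹ + b)) atTop (nhds (a / b)) := by
    have hnum : Tendsto (fun T : ℝ => T⁻¹ + a) atTop (nhds (0 + a)) :=
      tendsto_inv_atTop_zero.add_const a
    have hden : Tendsto (fun T : ℝ => T⁻¹ + b) atTop (nhds (0 + b)) :=
      tendsto_inv_atTop_zero.add_const b
    have h := hnum.div hden (by positivity)
    simp only [zero_add] at h
    exact h
  refine h1.congr' ?_
  filter_upwards [eventually_gt_atTop (0 : ℝ)] with T hT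
  have hT' : T ≠ 0 := ne_of_gt hT
  have hb' : (1 : ℝ) + b * T ≠ 0 := by positivity
  field_simp

theorem isotropic_codebook_highrate_limit {n : ℕ} (hn : 1 ≤ n)
    (lam : Fin n → ℝ) (hlam : ∀ i, 0 < lam i) (σ2 : ℝ) (hσ2 : 0 < σ2) :
    Tendsto (fun T : ℝ =>
        ((σ2 / (n : ℝ)) * ∑ i, lam i / (1 + lam i * T)) *
          (2 : ℝ) ^ (2 * ((1 / (2 * (n : ℝ))) * ∑ i, Real.logb 2 (1 + lam i * T))))
      atTop (nhds (σ2 * (∏ i, lam i) ^ ((1 : ℝ) / n))) := by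
  have hn0 : (0 : ℝ) < n := by exact_mod_cast hn
  have hnne : (n : ℝ) ≠ 0 := ne_of_gt hn0
  set K : ℝ := (∏ i, lam i) ^ ((1 : ℝ) / n) with hK
  -- per-term limit
  have hterm : ∀ i : Fin n, Tendsto (fun T : ℝ =>
      lam i * (∏ j, (1 + lam j * T) / (1 + lam i * T)) ^ ((1 : ℝ) / n))
      atTop (nhds K) := by
    intro i
    have hp : Tendsto (fun T : ℝ => ∏ j, (1 + lam j * T) / (1 + lam i * T)) atTop
        (nhds (∏ j, lam j / lam i)) :=
      tendsto_finset_prod _ (fun j _ => ratio_lim (lam j) (lam i) (hlam j) (hlam i))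
    have hpos : 0 < ∏ j : Fin n, lam j / lam i :=
      Finset.prod_pos fun j _ => div_pos (hlam j) (hlam i)
    have h2 : Tendsto (fun T : ℝ =>
        lam i * (∏ j, (1 + lam j * T) / (1 + lam i * T)) ^ ((1 : ℝ) / n))
        atTop (nhds (lam i * (∏ j : Fin n, lam j / lam i) ^ ((1 : ℝ) / n))) :=
      (hp.rpow_const (p := (1 : ℝ) / n) (Or.inl (ne_of_gt hpos))).const_mul (lam i)
    have hval : lam i * (∏ j : Fin n, lam j / lam i) ^ ((1 : ℝ) / n) = K := by
      have hpd : (∏ j : Fin n, lam j / lam i) = (∏ j, lam j) / (lam i) ^ n := by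
        rw [Finset.prod_div_distrib, Finset.prod_const, Finset.card_univ,
          Fintype.card_fin]
      have hprodpos : 0 < ∏ j, lam j := Finset.prod_pos fun j _ => hlam j
      have hlin : ((lam i) ^ n : ℝ) ^ ((1 : ℝ) / n) = lam i := by
        rw [← Real.rpow_natCast (lam i) n, ← Real.rpow_mul (le_of_lt (hlam i))]
        rw [mul_one_div, div_self hnne, Real.rpow_one]
      rw [hpd, Real.div_rpow (le_of_lt hprodpos) (pow_nonneg (le_of_lt (hlam i)) n),
        hlin, hK]
      field_simp [ne_of_gt (hlam i)]
    rw [← hval]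
    exact h2
  -- sum limit
  have hsum : Tendsto (fun T : ℝ =>
      (σ2 / n) * ∑ i, lam i * (∏ j, (1 + lam j * T) / (1 + lam i * T)) ^ ((1 : ℝ) / n))
      atTop (nhds ((σ2 / n) * ∑ _i : Fin n, K)) :=
    (tendsto_finset_sum _ (fun i _ => hterm i)).const_mul _
  have hfinval : (σ2 / n) * ∑ _i : Fin n, K = σ2 * K := by
    rw [Finset.sum_const, Finset.card_univ, Fintype.card_fin, nsmul_eq_mul]
    field_simp
  rw [hK] at hfinval
  rw [← hfinval]
  refine hsum.congr' ?_
  filter_upwards [eventually_gt_atTop (0 : ℝ)] with T hT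
  have hpos : ∀ j : Fin n, (0 : ℝ) < 1 + lam j * T := by
    intro j; have := hlam j; positivity
  set P : ℝ := ∏ j, (1 + lam j * T) with hP
  have hPpos : 0 < P := Finset.prod_pos fun j _ => hpos j
  -- rewrite the rpow
  have hexp : (2 : ℝ) ^ (2 * ((1 / (2 * (n : ℝ))) * ∑ i, Real.logb 2 (1 + lam i * T)))
      = P ^ ((1 : ℝ) / n) := by
    have hS : ∑ i, Real.logb 2 (1 + lam i * T) = Real.logb 2 P := by
      rw [hP]
      rw [Real.logb, Real.log_prod (fun j _ => ne_of_gt (hpos j))]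
      simp [Real.logb, Finset.sum_div]
    rw [hS]
    have : 2 * ((1 / (2 * (n : ℝ))) * Real.logb 2 P) = Real.logb 2 P * ((1:ℝ)/n) := by
      field_simp
    rw [this, Real.rpow_mul (by norm_num : (0:ℝ) ≤ 2), Real.rpow_logb two_pos
      (by norm_num) hPpos]
  rw [show ((σ2 / (n : ℝ)) * ∑ i, lam i / (1 + lam i * T)) *
        (2 : ℝ) ^ (2 * ((1 / (2 * (n : ℝ))) * ∑ i, Real.logb 2 (1 + lam i * T)))
      = (σ2 / n) * ∑ i, (lam i / (1 + lam i * T)) * P ^ ((1 : ℝ) / n) by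
    rw [hexp, mul_assoc, Finset.sum_mul]]
  congr 1
  refine Finset.sum_congr rfl fun i _ => ?_
  have hpd : (∏ j, (1 + lam j * T) / (1 + lam i * T)) = P / (1 + lam i * T) ^ n := by
    rw [Finset.prod_div_distrib, Finset.prod_const, Finset.card_univ, Fintype.card_fin,
      hP]
  have hlin : ((1 + lam i * T) ^ n : ℝ) ^ ((1 : ℝ) / n) = 1 + lam i * T := by
    rw [← Real.rpow_natCast (1 + lam i * T) n, ← Real.rpow_mul (le_of_lt (hpos i))]
    rw [mul_one_div, div_self hnne, Real.rpow_one]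
  rw [hpd, Real.div_rpow (le_of_lt hPpos) (pow_nonneg (le_of_lt (hpos i)) n), hlin]
  ring
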